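/- Let C be a coalgebra over a field k and let π : C → C/I₁(C) be the quotient linear map. Then the lazy quotient coalgebra C^[1] = C/I₁(C) is cocommutative: for every x ∈ C, (π ⊗ π)(Δ(x)) = (π ⊗ π)(τ(Δ(x))), where τ : C ⊗ C → C ⊗ C is the flip. -/

import Mathlib

open TensorProduct

/-- A tensor in `C ⊗ V` vanishes if all its contractions against linear
forms on the first factor vanish. -/
lemma tensor_eq_zero_of_forall_contraction (k : Type*) [Field k]
    (C V : Type*) [AddCommGroup C] [Module k C] [AddCommGroup V] [Module k V]
    (u : C ⊗[k] V)
    (h : ∀ φ : C →ₗ[k] k,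
      (TensorProduct.lid k V) (TensorProduct.map φ LinearMap.id u) = 0) :
    u = 0 := by
  classical
  set b := Module.Basis.ofVectorSpace k C
  set e : C ⊗[k] V ≃ₗ[k] (Module.Basis.ofVectorSpaceIndex k C →₀ V) :=
    (TensorProduct.congr b.repr (LinearEquiv.refl k V)).trans
      (TensorProduct.finsuppScalarLeft k V _)
  have key : ∀ i, (Finsupp.lapply i).comp (e : C ⊗[k] V →ₗ[k] _)
      = ((TensorProduct.lid k V).toLinearMap).comp
        (TensorProduct.map (b.coord i) LinearMap.id) := by
    intro i
    apply TensorProduct.ext'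
    intro a v
    simp [e, TensorProduct.finsuppScalarLeft_apply_tmul_apply, Module.Basis.coord]
  have : e u = 0 := by
    ext i
    have := congrArg (fun f => f u) (key i)
    simpa using this.trans (h (b.coord i))
  exact (map_eq_zero_iff e e.injective).mp this

lemma lid_lTensor (k : Type*) [Field k] (C Q : Type*)
    [AddCommGroup C] [Module k C] [AddCommGroup Q] [Module k Q]
    (f : C →ₗ[k] Q) (w : k ⊗[k] C) :
    (TensorProduct.lid k Q) (LinearMap.lTensor k f w)
      = f ((TensorProduct.lid k C) w) := by
  have : ((TensorProduct.lid k Q).toLinearMap).comp (LinearMap.lTensor k f)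
      = f.comp (TensorProduct.lid k C).toLinearMap := by
    apply TensorProduct.ext'
    intro a v
    simp
  exact congrArg (fun g => g w) this

lemma lid_map_comm (k : Type*) [Field k] (C : Type*)
    [AddCommGroup C] [Module k C] (φ : C →ₗ[k] k) (w : C ⊗[k] C) :
    (TensorProduct.lid k C)
        (TensorProduct.map φ LinearMap.id ((TensorProduct.comm k C C) w))
      = (TensorProduct.rid k C) (TensorProduct.map LinearMap.id φ w) := by
  have : ((TensorProduct.lid k C).toLinearMap).comp
        ((TensorProduct.map φ LinearMap.id).comp
          (TensorProduct.comm k C C).toLinearMap)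
      = ((TensorProduct.rid k C).toLinearMap).comp
          (TensorProduct.map LinearMap.id φ) := by
    apply TensorProduct.ext'
    intro a v
    simp [TensorProduct.smul_tmul']
  exact congrArg (fun g => g w) this

/-- `I₁(C)`: the subspace of a coalgebra `C` spanned by the elements
`φ(x₁)·x₂ − φ(x₂)·x₁` for `x ∈ C` and linear forms `φ : C → k`. -/
noncomputable def lazySubspace (k : Type*) [Field k] (C : Type*)
    [AddCommGroup C] [Module k C] [Coalgebra k C] : Submodule k C :=
  Submodule.span k {y : C | ∃ (x : C) (φ : C →ₗ[k] k),
    y = (TensorProduct.lid k C)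
          (TensorProduct.map φ LinearMap.id (Coalgebra.comul x))
      - (TensorProduct.rid k C)
          (TensorProduct.map LinearMap.id φ (Coalgebra.comul x))}

/-- the lazy quotient coalgebra `C^[1] = C/I₁(C)` is
cocommutative: for the projection `π : C → C/I₁(C)` and every `x ∈ C`,
`(π ⊗ π)(Δ(x)) = (π ⊗ π)(τ(Δ(x)))`. -/
theorem lazyQuotient_cocommutative (k : Type*) [Field k] (C : Type*)
    [AddCommGroup C] [Module k C] [Coalgebra k C] :
    ∀ x : C,
      TensorProduct.map (lazySubspace k C).mkQ (lazySubspace k C).mkQ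
          (Coalgebra.comul (R := k) x)
        = TensorProduct.map (lazySubspace k C).mkQ (lazySubspace k C).mkQ
            ((TensorProduct.comm k C C) (Coalgebra.comul (R := k) x)) := by
  intro x
  set I := lazySubspace k C
  set π := I.mkQ
  set t : C ⊗[k] C :=
    Coalgebra.comul (R := k) x
      - (TensorProduct.comm k C C) (Coalgebra.comul (R := k) x) with ht
  -- it suffices to show `(π ⊗ π) t = 0`
  rw [← sub_eq_zero, ← map_sub, ← ht]
  -- `(π ⊗ π) = (π ⊗ id) ∘ (id ⊗ π)`
  have hfactor : TensorProduct.map π π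
      = (TensorProduct.map π LinearMap.id).comp
          (TensorProduct.map LinearMap.id π) := by
    rw [← TensorProduct.map_comp]
    simp
  rw [hfactor, LinearMap.comp_apply]
  -- the middle tensor vanishes
  have hu : TensorProduct.map LinearMap.id π t = 0 := by
    apply tensor_eq_zero_of_forall_contraction k C
    intro φ
    have hcomp : TensorProduct.map φ LinearMap.id
          ((TensorProduct.map LinearMap.id π) t)
        = LinearMap.lTensor k π (TensorProduct.map φ LinearMap.id t) := by
      rw [← LinearMap.comp_apply, ← TensorProduct.map_comp]
      rw [LinearMap.lTensor, ← LinearMap.comp_apply, ← TensorProduct.map_comp]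
      simp
    rw [hcomp, lid_lTensor]
    have hgen : (TensorProduct.lid k C) (TensorProduct.map φ LinearMap.id t)
        = (TensorProduct.lid k C)
            (TensorProduct.map φ LinearMap.id (Coalgebra.comul (R := k) x))
          - (TensorProduct.rid k C)
              (TensorProduct.map LinearMap.id φ (Coalgebra.comul (R := k) x)) := by
      rw [ht, map_sub, map_sub, lid_map_comm]
    rw [hgen]
    have : ((TensorProduct.lid k C)
            (TensorProduct.map φ LinearMap.id (Coalgebra.comul (R := k) x))
          - (TensorProduct.rid k C)
              (TensorProduct.map LinearMap.id φ (Coalgebra.comul (R := k) x))) ∈ I :=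
      Submodule.subset_span ⟨x, φ, rfl⟩
    show π _ = 0
    rw [Submodule.mkQ_apply, Submodule.Quotient.mk_eq_zero]
    exact this
  rw [hu, map_zero]
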